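/- For every n ≥ 3, each of the numbers n−1, n−3, and −1 is an eigenvalue of the rational n×n matrix B'_n = D_n + C_n + T'_n; that is, {n−1, n−3, −1} ⊆ spec(B'_n). -/

import Mathlib

/-- The quotient matrix `B'_n = D_n + C_n + T'_n` of the mixed graph `Γ(n,n,n−1)`, over
`ℚ` (one-based index `i` corresponds to `i−1 : Fin n`): `D_n` is diagonal with entries
`n−1−i`, `(C_n)_{ij} = 1` iff `i − j ≡ 1 (mod n)`, and `(T'_n)_{ij} = 1` iff
`i + j > n + 1`. -/
def Bn' (n : ℕ) : Matrix (Fin n) (Fin n) ℚ :=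
  Matrix.diagonal (fun i : Fin n => (n : ℚ) - 2 - i.val)
    + Matrix.of (fun i j : Fin n =>
        if (i.val : ℤ) - (j.val : ℤ) ≡ 1 [ZMOD (n : ℤ)] then 1 else 0)
    + Matrix.of (fun i j : Fin n => if n < i.val + j.val + 1 then 1 else 0)

lemma eig_of_vec {n : ℕ} (M : Matrix (Fin n) (Fin n) ℚ) (μ : ℚ) (v : Fin n → ℚ)
    (hv : v ≠ 0) (h : M.mulVec v = μ • v) :
    Module.End.HasEigenvalue M.mulVecLin μ :=
  Module.End.hasEigenvalue_of_hasEigenvector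
    ⟨Module.End.mem_eigenspace_iff.2 (by simpa using h), hv⟩

lemma eig_of_vec_transpose {n : ℕ} (M : Matrix (Fin n) (Fin n) ℚ) (μ : ℚ) (v : Fin n → ℚ)
    (hv : v ≠ 0) (h : M.transpose.mulVec v = μ • v) :
    Module.End.HasEigenvalue M.mulVecLin μ := by
  have hdet : (M - μ • 1).det = 0 := by
    rw [← Matrix.det_transpose, ← Matrix.exists_mulVec_eq_zero_iff]
    exact ⟨v, hv, by
      rw [Matrix.transpose_sub, Matrix.transpose_smul, Matrix.transpose_one,
        Matrix.sub_mulVec, Matrix.smul_mulVec, Matrix.one_mulVec, h, sub_self]⟩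
  obtain ⟨w, hw0, hw⟩ := Matrix.exists_mulVec_eq_zero_iff.2 hdet
  refine eig_of_vec M μ w hw0 ?_
  rw [Matrix.sub_mulVec, Matrix.smul_mulVec, Matrix.one_mulVec, sub_eq_zero] at hw
  exact hw

lemma cond_iff' {n : ℕ} (hn : 3 ≤ n) {a b : ℕ} (ha : a < n) (hb : b < n) :
    ((a : ℤ) - (b : ℤ) ≡ 1 [ZMOD (n : ℤ)]) ↔
      (b + 1 = a ∨ (a = 0 ∧ b = n - 1)) := by
  rw [Int.modEq_iff_dvd]
  have hn' : (0:ℤ) < (n:ℤ) := by exact_mod_cast Nat.lt_of_lt_of_le (by norm_num) hn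
  constructor
  · rintro ⟨k, hk⟩
    have haa : ((a:ℤ)) < n := by exact_mod_cast ha
    have hbb : ((b:ℤ)) < n := by exact_mod_cast hb
    have ha0 : (0:ℤ) ≤ (a:ℤ) := by positivity
    have hb0 : (0:ℤ) ≤ (b:ℤ) := by positivity
    have hk0 : 0 ≤ k := by
      by_contra h
      push_neg at h
      have h2 : k ≤ -1 := by omega
      have : (n:ℤ) * k ≤ (n:ℤ) * (-1) := mul_le_mul_of_nonneg_left h2 hn'.le
      linarith
    have hk1 : k ≤ 1 := by
      by_contra h
      push_neg at h
      have h2 : (2:ℤ) ≤ k := by omega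
      have : (n:ℤ) * 2 ≤ (n:ℤ) * k := mul_le_mul_of_nonneg_left h2 hn'.le
      linarith
    interval_cases k
    · left; omega
    · right; omega
  · rintro (h | ⟨h0, h1⟩)
    · exact ⟨0, by push_cast; omega⟩
    · exact ⟨1, by push_cast; omega⟩

lemma cond_iff {n : ℕ} (hn : 3 ≤ n) (i j : Fin n) :
    ((i.val : ℤ) - (j.val : ℤ) ≡ 1 [ZMOD (n : ℤ)]) ↔
      (j.val + 1 = i.val ∨ (i.val = 0 ∧ j.val = n - 1)) :=
  cond_iff' hn i.isLt j.isLt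

lemma Bn'_apply {n : ℕ} (i j : Fin n) :
    Bn' n i j = (if i = j then (n : ℚ) - 2 - i.val else 0)
      + (if (i.val : ℤ) - (j.val : ℤ) ≡ 1 [ZMOD (n : ℤ)] then 1 else 0)
      + (if n < i.val + j.val + 1 then 1 else 0) := by
  simp [Bn', Matrix.add_apply, Matrix.diagonal_apply]

lemma row_sum {n : ℕ} (hn : 3 ≤ n) :
    (Bn' n).mulVec (fun _ => (1:ℚ)) = ((n:ℚ) - 1) • (fun _ => (1:ℚ)) := by
  funext i
  have hi := i.isLt
  simp only [Matrix.mulVec, dotProduct, mul_one, Pi.smul_apply, smul_eq_mul]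
  simp only [Bn'_apply]
  rw [Finset.sum_add_distrib, Finset.sum_add_distrib]
  have hd : ∑ j : Fin n, (if i = j then (n : ℚ) - 2 - i.val else 0) = (n:ℚ) - 2 - i.val := by
    simp
  have hc : ∑ j : Fin n, (if (i.val : ℤ) - (j.val : ℤ) ≡ 1 [ZMOD (n : ℤ)] then (1:ℚ) else 0)
      = 1 := by
    calc ∑ j : Fin n, (if (i.val : ℤ) - (j.val : ℤ) ≡ 1 [ZMOD (n : ℤ)] then (1:ℚ) else 0)
        = ∑ j : Fin n, (if j = (⟨if i.val = 0 then n - 1 else i.val - 1,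
              by split <;> omega⟩ : Fin n) then (1:ℚ) else 0) := by
          refine Finset.sum_congr rfl fun j _ => ?_
          have : ((i.val : ℤ) - (j.val : ℤ) ≡ 1 [ZMOD (n : ℤ)])
              ↔ j = (⟨if i.val = 0 then n - 1 else i.val - 1, by split <;> omega⟩ : Fin n) := by
            rw [cond_iff hn i j, Fin.ext_iff]
            simp only [Fin.val_mk]
            split <;> omega
          simp only [this]
      _ = 1 := by simp
  have ht : ∑ j : Fin n, (if n < i.val + j.val + 1 then (1:ℚ) else 0) = (i.val : ℚ) := by
    rw [Fin.sum_univ_eq_sum_range (fun j => if n < i.val + j + 1 then (1:ℚ) else 0) n]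
    rw [Finset.sum_boole]
    have : (Finset.range n).filter (fun j => n < i.val + j + 1) = Finset.Ico (n - i.val) n := by
      ext j
      simp only [Finset.mem_filter, Finset.mem_range, Finset.mem_Ico]
      omega
    rw [this, Nat.card_Ico]
    congr 1
    omega
  rw [hd, hc, ht]
  ring

set_option maxHeartbeats 2000000 in
/-- For every `n ≥ 3`, each of `n−1`, `n−3` and `−1` is an eigenvalue
of the rational matrix `B'_n`. -/
theorem stmt11 (n : ℕ) (hn : 3 ≤ n) :
    Module.End.HasEigenvalue (Matrix.mulVecLin (Bn' n)) ((n : ℚ) - 1)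
      ∧ Module.End.HasEigenvalue (Matrix.mulVecLin (Bn' n)) ((n : ℚ) - 3)
      ∧ Module.End.HasEigenvalue (Matrix.mulVecLin (Bn' n)) (-1) := by
  have hn0 : (0:ℚ) < n := by exact_mod_cast Nat.lt_of_lt_of_le (by norm_num) hn
  have hn3 : (3:ℚ) ≤ n := by exact_mod_cast hn
  refine ⟨?_, ?_, ?_⟩
  · refine eig_of_vec _ _ (fun _ => (1:ℚ)) ?_ (row_sum hn)
    intro h
    have := congrFun h ⟨0, by omega⟩
    simp at this
  · -- n - 3 : left eigenvector e_1 - e_0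
    refine eig_of_vec_transpose _ _
      (Pi.single (⟨1, by omega⟩ : Fin n) (1:ℚ) - Pi.single ⟨0, by omega⟩ 1) ?_ ?_
    · intro h
      have := congrFun h ⟨1, by omega⟩
      simp [Pi.single_apply, Fin.ext_iff] at this
    · rw [Matrix.mulVec_sub, Matrix.mulVec_single_one, Matrix.mulVec_single_one]
      funext i
      have hi := i.isLt
      simp only [Matrix.col_apply, Matrix.transpose_apply, Pi.sub_apply, Pi.smul_apply, Pi.single_apply,
        smul_eq_mul, mul_one]
      rw [Bn'_apply, Bn'_apply]
      simp only [cond_iff' hn (show 1 < n by omega) hi, cond_iff' hn (show 0 < n by omega) hi,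
        Fin.ext_iff, Fin.val_mk]
      rcases Nat.lt_or_ge i.val 2 with h2 | h2
      · interval_cases h : i.val <;> split_ifs <;> (try simp only [false_or, false_and, true_and, or_false, and_true, true_or, and_false, not_true, not_false_iff] at *) <;> first | contradiction | omega | (push_cast; ring)
      · split_ifs <;> (try simp only [false_or, false_and, true_and, or_false, and_true, true_or, and_false, not_true, not_false_iff] at *) <;> first | contradiction | omega | (push_cast; ring)
  · -- -1 : eigenvector n • e_last - 1
    have hcol : (Bn' n).mulVec (Pi.single (⟨n - 1, by omega⟩ : Fin n) (1:ℚ))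
        = (fun _ => (1:ℚ)) - Pi.single ⟨n - 1, by omega⟩ 1 := by
      rw [Matrix.mulVec_single_one]
      funext i
      have hi := i.isLt
      simp only [Matrix.col_apply, Pi.sub_apply, Pi.single_apply, mul_one]
      rw [Bn'_apply]
      simp only [cond_iff' hn hi (show n - 1 < n by omega), Fin.ext_iff, Fin.val_mk,
        and_true, true_and, or_false, false_or]
      by_cases hc1 : i.val = n - 1
      · rw [hc1]
        push_cast [Nat.cast_sub (by omega : 1 ≤ n)]
        split_ifs <;> first | omega | ring
      · split_ifs <;> first | omega | ring
    refine eig_of_vec _ _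
      ((n:ℚ) • (Pi.single (⟨n - 1, by omega⟩ : Fin n) (1:ℚ) : Fin n → ℚ) - fun _ => (1:ℚ)) ?_ ?_
    · intro h
      have := congrFun h ⟨n - 1, by omega⟩
      simp [Pi.single_apply] at this
      linarith
    · rw [Matrix.mulVec_sub, Matrix.mulVec_smul, hcol, row_sum hn]
      funext i
      simp only [Pi.sub_apply, Pi.smul_apply, Pi.single_apply, smul_eq_mul, mul_one]
      split_ifs <;> ring
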